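/- The language L over {a, b} consisting of all words with an equal number of a's and b's is not a visibly pushdown language for any partition of the alphabet {a, b} into call, internal, and response letters. -/

import Mathlib

inductive VKind | call | internal | response
deriving DecidableEq

/-- A (nondeterministic) visibly pushdown automaton over alphabet `A`
partitioned by `kind` into call, internal and response letters. -/
structure VPA (A : Type) (kind : A → VKind) where
  Q : Type
  Γ : Type
  [finQ : Fintype Q]
  [finΓ : Fintype Γ]
  init : Q
  accept : Set Q
  /-- transitions on call letters: push one symbol, do not inspect the stack -/
  δc : Q → A → Set (Q × Γ)
  /-- transitions on internal letters: do not inspect or modify the stack -/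
  δi : Q → A → Set Q
  /-- transitions on response letters: pop the topmost stack symbol -/
  δr : Q → A → Γ → Set Q
  /-- transitions on response letters read on the empty stack (bottom symbol) -/
  δb : Q → A → Set Q

namespace VPA

variable {A : Type} {kind : A → VKind}

inductive Steps (M : VPA A kind) : M.Q × List M.Γ → List A → M.Q × List M.Γ → Prop
  | nil (c) : Steps M c [] c
  | call {q s a q' γ w c} : kind a = .call → (q', γ) ∈ M.δc q a →
      Steps M (q', γ :: s) w c → Steps M (q, s) (a :: w) c
  | internal {q s a q' w c} : kind a = .internal → q' ∈ M.δi q a →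
      Steps M (q', s) w c → Steps M (q, s) (a :: w) c
  | pop {q γ s a q' w c} : kind a = .response → q' ∈ M.δr q a γ →
      Steps M (q', s) w c → Steps M (q, γ :: s) (a :: w) c
  | popEmpty {q a q' w c} : kind a = .response → q' ∈ M.δb q a →
      Steps M (q', []) w c → Steps M (q, []) (a :: w) c

/-- A VPA accepts a word if reading it from the initial state with empty stack
can end in an accepting state (with arbitrary stack contents). -/
def Accepts (M : VPA A kind) (w : List A) : Prop :=
  ∃ c : M.Q × List M.Γ, M.Steps (M.init, []) w c ∧ c.1 ∈ M.accept

end VPA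

/-- `L` is a visibly pushdown language over the partition `kind`. -/
def IsVPL {A : Type} (kind : A → VKind) (L : Set (List A)) : Prop :=
  ∃ M : VPA A kind, L = {w | M.Accepts w}

inductive AB | a | b
deriving DecidableEq

namespace VPLProof

variable {A : Type} {kind : A → VKind}

/-- state-only transition relation, ignoring the stack -/
def Rel (M : VPA A kind) (q : M.Q) (a : A) (q' : M.Q) : Prop :=
  (kind a = .call ∧ ∃ γ, (q', γ) ∈ M.δc q a) ∨
  (kind a = .internal ∧ q' ∈ M.δi q a) ∨
  (kind a = .response ∧ q' ∈ M.δb q a)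

inductive PathR (M : VPA A kind) : M.Q → List A → M.Q → Prop
  | nil (q) : PathR M q [] q
  | cons {q a q' w q''} : Rel M q a q' → PathR M q' w q'' → PathR M q (a :: w) q''

/-- no response letter occurs after a call letter -/
def Good (kind : A → VKind) (w : List A) : Prop :=
  ∃ u v, w = u ++ v ∧ (∀ a ∈ u, kind a ≠ .call) ∧ (∀ a ∈ v, kind a ≠ .response)

lemma good_tail {a : A} {w : List A} (h : Good kind (a :: w)) : Good kind w := by
  obtain ⟨u, v, huv, hu, hv⟩ := h
  cases u with
  | nil =>
    cases v with
    | nil => simp at huv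
    | cons c v' =>
      simp only [List.nil_append, List.cons.injEq] at huv
      exact ⟨[], v', by simp [huv.2], by simp, fun b hb => hv b (List.mem_cons_of_mem _ hb)⟩
  | cons c u' =>
    simp only [List.cons_append, List.cons.injEq] at huv
    exact ⟨u', v, huv.2, fun b hb => hu b (List.mem_cons_of_mem _ hb), hv⟩

lemma good_call {a : A} {w : List A} (h : Good kind (a :: w)) (ha : kind a = .call) :
    ∀ b ∈ w, kind b ≠ .response := by
  obtain ⟨u, v, huv, hu, hv⟩ := h
  cases u with
  | nil =>
    simp only [List.nil_append] at huv
    subst huv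
    exact fun b hb => hv b (List.mem_cons_of_mem _ hb)
  | cons c u' =>
    simp only [List.cons_append, List.cons.injEq] at huv
    exact absurd ha (huv.1 ▸ hu c (List.mem_cons_self))

lemma steps_path {M : VPA A kind} :
    ∀ {c w c'}, M.Steps c w c' →
      ((c.2 = [] ∧ Good kind w) ∨ (∀ b ∈ w, kind b ≠ .response)) →
      PathR M c.1 w c'.1 := by
  intro c w c' h
  induction h with
  | nil => intro _; exact PathR.nil _
  | call ha hδ _ ih =>
    intro hg
    refine PathR.cons (Or.inl ⟨ha, _, hδ⟩) (ih (Or.inr ?_))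
    rcases hg with ⟨_, hgood⟩ | hnr
    · exact good_call hgood ha
    · exact fun b hb => hnr b (List.mem_cons_of_mem _ hb)
  | internal ha hδ _ ih =>
    intro hg
    refine PathR.cons (Or.inr (Or.inl ⟨ha, hδ⟩)) (ih ?_)
    rcases hg with ⟨hs, hgood⟩ | hnr
    · exact Or.inl ⟨hs, good_tail hgood⟩
    · exact Or.inr fun b hb => hnr b (List.mem_cons_of_mem _ hb)
  | pop ha hδ _ ih =>
    intro hg
    rcases hg with ⟨hs, _⟩ | hnr
    · simp at hs
    · exact absurd ha (hnr _ (List.mem_cons_self))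
  | popEmpty ha hδ _ ih =>
    intro hg
    rcases hg with ⟨_, hgood⟩ | hnr
    · exact PathR.cons (Or.inr (Or.inr ⟨ha, hδ⟩)) (ih (Or.inl ⟨rfl, good_tail hgood⟩))
    · exact absurd ha (hnr _ (List.mem_cons_self))

lemma path_steps_noresp {M : VPA A kind} :
    ∀ {q w q'}, PathR M q w q' → (∀ b ∈ w, kind b ≠ .response) →
      ∀ s, ∃ s', M.Steps (q, s) w (q', s') := by
  intro q w q' h
  induction h with
  | nil q => exact fun _ s => ⟨s, VPA.Steps.nil _⟩
  | cons hrel _ ih =>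
    intro hnr s
    have hnr' : ∀ b ∈ _, kind b ≠ VKind.response :=
      fun b hb => hnr b (List.mem_cons_of_mem _ hb)
    rcases hrel with ⟨ha, γ, hδ⟩ | ⟨ha, hδ⟩ | ⟨ha, hδ⟩
    · obtain ⟨s', hs⟩ := ih hnr' (γ :: s)
      exact ⟨s', VPA.Steps.call ha hδ hs⟩
    · obtain ⟨s', hs⟩ := ih hnr' s
      exact ⟨s', VPA.Steps.internal ha hδ hs⟩
    · exact absurd ha (hnr _ (List.mem_cons_self))

lemma path_steps_good {M : VPA A kind} :
    ∀ {q w q'}, PathR M q w q' → Good kind w →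
      ∃ s', M.Steps (q, []) w (q', s') := by
  intro q w q' h
  induction h with
  | nil q => exact fun _ => ⟨[], VPA.Steps.nil _⟩
  | @cons q a q1 w q'' hrel hp ih =>
    intro hgood
    rcases hrel with ⟨ha, γ, hδ⟩ | ⟨ha, hδ⟩ | ⟨ha, hδ⟩
    · obtain ⟨s', hs⟩ := path_steps_noresp hp (good_call hgood ha) [γ]
      exact ⟨s', VPA.Steps.call ha hδ hs⟩
    · obtain ⟨s', hs⟩ := ih (good_tail hgood)
      exact ⟨s', VPA.Steps.internal ha hδ hs⟩
    · obtain ⟨s', hs⟩ := ih (good_tail hgood)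
      exact ⟨s', VPA.Steps.popEmpty ha hδ hs⟩

lemma path_append_split {M : VPA A kind} :
    ∀ {u : List A} {q v q''}, PathR M q (u ++ v) q'' →
      ∃ q', PathR M q u q' ∧ PathR M q' v q'' := by
  intro u
  induction u with
  | nil => exact fun h => ⟨_, PathR.nil _, h⟩
  | cons a u ih =>
    intro q v q'' h
    cases h with
    | cons hrel hp =>
      obtain ⟨q', h1, h2⟩ := ih hp
      exact ⟨q', PathR.cons hrel h1, h2⟩

lemma path_append {M : VPA A kind} :
    ∀ {q u q' v q''}, PathR M q u q' → PathR M q' v q'' → PathR M q (u ++ v) q'' := by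
  intro q u q' v q'' h
  induction h with
  | nil => exact id
  | cons hrel _ ih => exact fun h2 => PathR.cons hrel (ih h2)

lemma main_aux {kind : AB → VKind} (M : VPA AB kind)
    (hM : {w : List AB | w.count AB.a = w.count AB.b} = {w | M.Accepts w})
    (x y : AB)
    (hcount : ∀ n m : ℕ,
      (List.replicate n x ++ List.replicate m y) ∈
        {w : List AB | w.count AB.a = w.count AB.b} ↔ n = m)
    (hgood : ∀ n m : ℕ, Good kind (List.replicate n x ++ List.replicate m y)) :
    False := by
  haveI := M.finQ
  have : Finite (Set M.Q) := inferInstance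
  obtain ⟨n, m, hnm, hg⟩ := Finite.exists_ne_map_eq_of_infinite
    (fun n : ℕ => {q : M.Q | PathR M M.init (List.replicate n x) q})
  -- x^n y^n is in the language, hence accepted
  have hmem : (List.replicate n x ++ List.replicate n y) ∈
      {w : List AB | w.count AB.a = w.count AB.b} := (hcount n n).2 rfl
  rw [hM] at hmem
  obtain ⟨c, hsteps, hacc⟩ := hmem
  have hpath : PathR M M.init (List.replicate n x ++ List.replicate n y) c.1 :=
    steps_path hsteps (Or.inl ⟨rfl, hgood n n⟩)
  obtain ⟨q', h1, h2⟩ := path_append_split hpath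
  have h1' : PathR M M.init (List.replicate m x) q' := by
    have : q' ∈ {q : M.Q | PathR M M.init (List.replicate n x) q} := h1
    rw [hg] at this
    exact this
  have hpath' : PathR M M.init (List.replicate m x ++ List.replicate n y) c.1 :=
    path_append h1' h2
  obtain ⟨s', hs⟩ := path_steps_good hpath' (hgood m n)
  have haccepts : M.Accepts (List.replicate m x ++ List.replicate n y) :=
    ⟨(c.1, s'), hs, hacc⟩
  have : (List.replicate m x ++ List.replicate n y) ∈
      {w : List AB | w.count AB.a = w.count AB.b} := by
    rw [hM]; exact haccepts
  exact hnm ((hcount m n).1 this).symm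

end VPLProof

open VPLProof in
/-- The language of words over {a,b} with equally many a's and b's is not a
visibly pushdown language for any partition of the alphabet. -/
theorem equal_counts_not_VPL :
    ∀ kind : AB → VKind,
      ¬ IsVPL kind {w : List AB | w.count AB.a = w.count AB.b} := by
  intro kind ⟨M, hM⟩
  by_cases hb : kind AB.b = VKind.response
  · refine main_aux M hM AB.b AB.a (fun n m => ?_) (fun n m => ?_)
    · simp [List.count_append, List.count_replicate]
      omega
    · by_cases ha : kind AB.a = VKind.response
      · refine ⟨List.replicate n AB.b ++ List.replicate m AB.a, [], by simp, ?_, by simp⟩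
        intro c hc
        rcases List.mem_append.1 hc with h | h
        · rw [List.eq_of_mem_replicate h, hb]; simp
        · rw [List.eq_of_mem_replicate h, ha]; simp
      · refine ⟨List.replicate n AB.b, List.replicate m AB.a, rfl, ?_, ?_⟩
        · intro c hc; rw [List.eq_of_mem_replicate hc, hb]; simp
        · intro c hc; rw [List.eq_of_mem_replicate hc]; exact ha
  · refine main_aux M hM AB.a AB.b (fun n m => ?_) (fun n m => ?_)
    · constructor
      · intro h; simpa [List.count_append, List.count_replicate] using h
      · intro h; subst h; simp [List.count_append, List.count_replicate]
    · by_cases ha : kind AB.a = VKind.call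
      · refine ⟨[], List.replicate n AB.a ++ List.replicate m AB.b, by simp, by simp, ?_⟩
        intro c hc
        rcases List.mem_append.1 hc with h | h
        · rw [List.eq_of_mem_replicate h, ha]; simp
        · rw [List.eq_of_mem_replicate h]; exact hb
      · refine ⟨List.replicate n AB.a, List.replicate m AB.b, rfl, ?_, ?_⟩
        · intro c hc; rw [List.eq_of_mem_replicate hc]; exact ha
        · intro c hc; rw [List.eq_of_mem_replicate hc]; exact hb
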